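/- Let K = k1/k2 be nonzero differential-reduced with d1 = deg k1 ≥ d2 = deg k2 (or d1 = d2 − 1 with −lc(k1)/lc(k2) not a positive integer). Then for every p ∈ E[y] there exists q ∈ E[y] with deg q < d1 such that p − q lies in M_K = { k2·D(w) + k1·w : w ∈ E[y] }. -/
import Mathlib


open Polynomial

theorem stmt_5_aux {E : Type*} [Field E] [CharZero E] (k1 k2 : E[X]) (hk1 : k1 ≠ 0)
    (hk2 : k2 ≠ 0)
    (hcase : k2.natDegree ≤ k1.natDegree ∨
      (k1.natDegree + 1 = k2.natDegree ∧
        ∀ n : ℕ, 0 < n → -(k1.leadingCoeff / k2.leadingCoeff) ≠ (n : E)))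
    (p : E[X]) :
    ∃ q w : E[X], q.degree < (k1.natDegree : WithBot ℕ) ∧
      p - q = k2 * derivative w + k1 * w := by
  have hd2 : k2.natDegree ≤ k1.natDegree + 1 := by rcases hcase with h | ⟨h, _⟩ <;> omega
  suffices H : ∀ n (p : E[X]), p.natDegree ≤ n → ∃ q w : E[X],
      q.degree < (k1.natDegree : WithBot ℕ) ∧ p - q = k2 * derivative w + k1 * w from
    H p.natDegree p le_rfl
  intro n
  induction n using Nat.strong_induction_on with
  | _ n ih =>
  intro p hp
  by_cases h0 : p.degree < (k1.natDegree : WithBot ℕ)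
  · exact ⟨p, 0, h0, by simp⟩
  push_neg at h0
  have hp0 : p ≠ 0 := by
    rintro rfl
    simp only [degree_zero] at h0
    exact absurd h0 (by simp)
  have hdN : k1.natDegree ≤ p.natDegree := by
    have := h0.trans (degree_le_natDegree)
    exact_mod_cast this
  set d1 := k1.natDegree with hd1
  set N := p.natDegree with hN
  set m := N - d1 with hm
  have hNm : N = d1 + m := by omega
  set A : E := k1.coeff d1 + (m : E) * k2.coeff (d1 + 1) with hAdef
  have hA : A ≠ 0 := by
    rcases hcase with h | ⟨h, h2⟩
    · have hz : k2.coeff (d1 + 1) = 0 := coeff_eq_zero_of_natDegree_lt (by omega)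
      have : A = k1.leadingCoeff := by
        rw [hAdef, hz, ← coeff_natDegree]; ring
      rw [this]
      exact leadingCoeff_ne_zero.mpr hk1
    · rcases Nat.eq_zero_or_pos m with hm0 | hm0
      · have : A = k1.leadingCoeff := by
          rw [hAdef, hm0, ← coeff_natDegree]; push_cast; ring
        rw [this]
        exact leadingCoeff_ne_zero.mpr hk1
      · intro hA0
        have hk2c : k2.coeff (d1 + 1) = k2.leadingCoeff := by
          rw [← coeff_natDegree, ← h]
        rw [hAdef, hk2c] at hA0
        have hA0' : k1.leadingCoeff + (m : E) * k2.leadingCoeff = 0 := hA0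
        apply h2 m hm0
        have hlc2 : k2.leadingCoeff ≠ 0 := leadingCoeff_ne_zero.mpr hk2
        field_simp
        linear_combination -hA0'
  set c : E := p.coeff N / A with hc
  set w0 : E[X] := monomial m c with hw0
  have hder : derivative w0 = monomial (m - 1) (c * m) := derivative_monomial c m
  have hc1 : (k1 * w0).coeff N = k1.coeff d1 * c := by
    rw [hw0, hNm]; exact coeff_mul_monomial k1 m d1 c
  have hc2 : (k2 * derivative w0).coeff N = k2.coeff (d1 + 1) * (c * m) := by
    rw [hder]
    rcases Nat.eq_zero_or_pos m with hm0 | hm0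
    · simp [hm0]
    · obtain ⟨m', hm'⟩ : ∃ m', m = m' + 1 := ⟨m - 1, by omega⟩
      have e1 : m - 1 = m' := by omega
      have e2 : N = (d1 + 1) + m' := by omega
      rw [e1, e2]
      exact coeff_mul_monomial k2 m' (d1 + 1) (c * (m : E))
  have hcoeffN : (k2 * derivative w0 + k1 * w0).coeff N = p.coeff N := by
    rw [coeff_add, hc1, hc2, hc]
    field_simp
    ring
  have hb1 : (k1 * w0).degree ≤ (N : WithBot ℕ) := by
    refine (degree_mul_le _ _).trans ?_
    refine le_trans (add_le_add degree_le_natDegree (degree_monomial_le m c)) ?_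
    rw [hNm]
    exact_mod_cast le_refl ((d1 + m : ℕ) : WithBot ℕ)
  have hb2 : (k2 * derivative w0).degree ≤ (N : WithBot ℕ) := by
    rw [hder]
    rcases Nat.eq_zero_or_pos m with hm0 | hm0
    · simp [hm0]
    · refine (degree_mul_le _ _).trans ?_
      refine le_trans (add_le_add degree_le_natDegree (degree_monomial_le (m - 1) _)) ?_
      have : (k2.natDegree : WithBot ℕ) + ((m - 1 : ℕ) : WithBot ℕ) = ((k2.natDegree + (m - 1) : ℕ) : WithBot ℕ) := by
        push_cast; rfl
      rw [this]
      exact_mod_cast (by omega : k2.natDegree + (m - 1) ≤ N)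
  set r : E[X] := p - (k2 * derivative w0 + k1 * w0) with hr
  have hrdeg : r.degree < p.degree := by
    have hrle : r.degree ≤ (N : WithBot ℕ) := by
      refine (degree_sub_le _ _).trans ?_
      exact max_le (degree_le_natDegree) ((degree_add_le _ _).trans (max_le hb2 hb1))
    have hrc : r.coeff N = 0 := by
      rw [hr, coeff_sub, hcoeffN, sub_self]
    rw [degree_eq_natDegree hp0, ← hN]
    refine lt_of_le_of_ne hrle fun hcon => ?_
    have hr0 : r ≠ 0 := fun h => by rw [h] at hcon; simp at hcon
    have : r.natDegree = N := by
      have := degree_eq_natDegree hr0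
      rw [hcon] at this
      exact_mod_cast this.symm
    rw [← this] at hrc
    exact leadingCoeff_ne_zero.mpr hr0 hrc
  by_cases hr0 : r = 0
  · refine ⟨0, w0, ?_, ?_⟩
    · rw [degree_zero]; exact bot_lt_iff_ne_bot.mpr (by simp)
    · rw [sub_zero, ← sub_eq_zero, ← hr, hr0]
  · have hlt : r.natDegree < n := by
      have := natDegree_lt_natDegree hr0 hrdeg
      omega
    obtain ⟨q, w1, hq, hw1⟩ := ih r.natDegree hlt r le_rfl
    refine ⟨q, w0 + w1, hq, ?_⟩
    rw [hr] at hw1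
    rw [derivative_add]
    linear_combination hw1


/-- `K = k1/k2` is differential-reduced: `gcd(k2, k1 - i·D(k2)) = 1` for all integers `i`. -/
def DiffReduced {E : Type*} [Field E] (k1 k2 : E[X]) : Prop :=
  ∀ i : ℤ, IsCoprime k2 (k1 - (i : E[X]) * derivative k2)

/-- The derivation `d/dy` on the field of rational functions `E(y)`. -/
noncomputable def Dr {E : Type*} [Field E] (f : RatFunc E) : RatFunc E :=
  (algebraMap E[X] (RatFunc E) (derivative f.num) * algebraMap E[X] (RatFunc E) f.denom -
      algebraMap E[X] (RatFunc E) f.num * algebraMap E[X] (RatFunc E) (derivative f.denom)) /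
    (algebraMap E[X] (RatFunc E) f.denom) ^ 2

theorem stmt_5 {E : Type*} [Field E] [CharZero E] (k1 k2 : E[X]) (hk1 : k1 ≠ 0)
    (hk2 : k2 ≠ 0) (hcop : IsCoprime k1 k2) (hdr : DiffReduced k1 k2)
    (hcase : k2.natDegree ≤ k1.natDegree ∨
      (k1.natDegree + 1 = k2.natDegree ∧
        ∀ n : ℕ, 0 < n → -(k1.leadingCoeff / k2.leadingCoeff) ≠ (n : E)))
    (p : E[X]) :
    ∃ q w : E[X], q.degree < (k1.natDegree : WithBot ℕ) ∧
      p - q = k2 * derivative w + k1 * w :=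
  stmt_5_aux k1 k2 hk1 hk2 hcase p
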